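/- Let G be a compact Hausdorff topological group with Haar probability measure μ, let g ≥ 1 and r ≥ g, and let t_g = x_1²⋯x_g² ∈ F_r be the non-orientable surface word. Then for every continuous irreducible unitary representation π of G on a nonzero finite-dimensional complex inner product space V, ∫_{G^r} tr(π(t_g(𝐠))) dμ^r(𝐠) = FS(π)^g / (dim V)^{g-1}, where FS(π) = ∫_G tr(π(h·h)) dμ(h) is the Frobenius–Schur indicator of π. -/

import Mathlib

open MeasureTheory

/-- A unitary representation `π` of a group `G` on a complex inner product space `V` is
irreducible if the only `π(G)`-invariant subspaces of `V` are `⊥` and `⊤`. -/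
def IsIrreducibleRep {G V : Type*} [Group G] [NormedAddCommGroup V] [InnerProductSpace ℂ V]
    [CompleteSpace V] (π : G →* unitary (V →L[ℂ] V)) : Prop :=
  ∀ U : Submodule ℂ V, (∀ (g : G), ∀ v ∈ U, (π g : V →L[ℂ] V) v ∈ U) → U = ⊥ ∨ U = ⊤

/-- The non-orientable surface word `t_g = x_1²⋯x_g² ∈ F_r` (for `g ≤ r`), with generators
indexed from `0`. -/
def nonorientableSurfaceWord (g r : ℕ) (h : g ≤ r) : FreeGroup (Fin r) :=
  (List.ofFn fun i : Fin g =>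
    FreeGroup.of (⟨(i : ℕ), by omega⟩ : Fin r) *
    FreeGroup.of (⟨(i : ℕ), by omega⟩ : Fin r)).prod

/- ### Auxiliary lemmas -/

lemma integrable_of_cont_sm {X E : Type*} [TopologicalSpace X] [CompactSpace X] [Nonempty X]
    [MeasurableSpace X] (ν : Measure X) [IsFiniteMeasure ν] [NormedAddCommGroup E]
    {f : X → E} (hc : Continuous f) (hsm : StronglyMeasurable f) : Integrable f ν := by
  obtain ⟨x0, hx0⟩ :=
    hc.norm.exists_forall_ge (by rw [Filter.cocompact_eq_bot]; exact Filter.tendsto_bot)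
  exact ⟨hsm.aestronglyMeasurable,
    HasFiniteIntegral.of_bounded (C := ‖f x0‖) (Filter.Eventually.of_forall fun x => hx0 x)⟩

lemma contListProd {X A ι : Type*} [TopologicalSpace X] [NormedRing A]
    (l : List ι) (φ : ι → X → A) (h : ∀ i, Continuous (φ i)) :
    Continuous fun x => (l.map fun j => φ j x).prod := by
  induction l with
  | nil => simpa using continuous_const
  | cons j t ih => simp only [List.map_cons, List.prod_cons]; exact (h j).mul ih

lemma smListProd {X A ι : Type*} [MeasurableSpace X] [NormedRing A]
    (l : List ι) (φ : ι → X → A) (h : ∀ i, StronglyMeasurable (φ i)) :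
    StronglyMeasurable fun x => (l.map fun j => φ j x).prod := by
  induction l with
  | nil => simpa using stronglyMeasurable_const
  | cons j t ih => simp only [List.map_cons, List.prod_cons]; exact (h j).mul ih

lemma integral_prod_mul_op {α β A : Type*} [MeasurableSpace α] [MeasurableSpace β]
    [NormedRing A] [NormedAlgebra ℂ A] [CompleteSpace A]
    (να : Measure α) (νβ : Measure β) [SFinite να] [SFinite νβ]
    {f : α → A} {g : β → A} (hfg : Integrable (fun p : α × β => f p.1 * g p.2) (να.prod νβ))
    (hf : Integrable f να) (hg : Integrable g νβ) :
    ∫ p : α × β, f p.1 * g p.2 ∂(να.prod νβ) = (∫ a, f a ∂να) * ∫ b, g b ∂νβ := by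
  rw [integral_prod _ hfg]
  have h1 : ∀ a, ∫ b, f a * g b ∂νβ = f a * ∫ b, g b ∂νβ := fun a => by
    simpa using (ContinuousLinearMap.mul ℂ A (f a)).integral_comp_comm hg
  simp_rw [h1]
  simpa using ((ContinuousLinearMap.mul ℂ A).flip (∫ b, g b ∂νβ)).integral_comp_comm hf

section PiIntegrals

variable {X : Type*} [TopologicalSpace X] [CompactSpace X] [Nonempty X]
    [MeasurableSpace X] [BorelSpace X]
    {A : Type*} [NormedRing A] [NormedAlgebra ℂ A] [CompleteSpace A] [SecondCountableTopology A]

lemma integral_pi_fin_prod (μ : Measure X) [IsProbabilityMeasure μ]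
    {f : X → A} (hf : Continuous f) :
    ∀ m : ℕ, (∫ x : Fin m → X, ((List.finRange m).map fun i => f (x i)).prod
        ∂(Measure.pi fun _ : Fin m => μ)) = (∫ h, f h ∂μ) ^ m := by
  have hsmf := hf.stronglyMeasurable
  have hfint : Integrable f μ := integrable_of_cont_sm μ hf hsmf
  intro m
  induction m with
  | zero => simp
  | succ m ih =>
    have hmp := measurePreserving_piFinSuccAbove (fun _ : Fin (m + 1) => μ) 0
    set e := MeasurableEquiv.piFinSuccAbove (fun _ : Fin (m + 1) => X) 0 with he
    have hψc : Continuous fun y : Fin m → X =>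
        ((List.finRange m).map fun i => f (y i)).prod :=
      contListProd _ _ fun i => hf.comp (continuous_apply _)
    have hψsm : StronglyMeasurable fun y : Fin m → X =>
        ((List.finRange m).map fun i => f (y i)).prod :=
      smListProd _ _ fun i => hsmf.comp_measurable (measurable_pi_apply _)
    set F : X × (Fin m → X) → A :=
      fun q => f q.1 * ((List.finRange m).map fun i => f (q.2 i)).prod with hF
    have hFc : Continuous F := (hf.comp continuous_fst).mul (hψc.comp continuous_snd)
    have hFsm : StronglyMeasurable F :=
      (hsmf.comp_measurable measurable_fst).mul (hψsm.comp_measurable measurable_snd)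
    have key : ∀ x : Fin (m + 1) → X,
        ((List.finRange (m + 1)).map fun i => f (x i)).prod = F (e x) := by
      intro x
      simp [hF, he, List.finRange_succ, List.map_map, Function.comp_def,
        MeasurableEquiv.piFinSuccAbove, Fin.succAbove_zero, Fin.tail]
    calc (∫ x : Fin (m + 1) → X, ((List.finRange (m + 1)).map fun i => f (x i)).prod
            ∂(Measure.pi fun _ : Fin (m + 1) => μ))
        = ∫ x : Fin (m + 1) → X, F (e x) ∂(Measure.pi fun _ : Fin (m + 1) => μ) :=
          integral_congr_ae (Filter.Eventually.of_forall key)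
      _ = ∫ q : X × (Fin m → X), F q ∂(μ.prod (Measure.pi fun _ : Fin m => μ)) :=
          hmp.integral_comp e.measurableEmbedding F
      _ = (∫ h, f h ∂μ) * ∫ y : Fin m → X, ((List.finRange m).map fun i => f (y i)).prod
            ∂(Measure.pi fun _ : Fin m => μ) :=
          integral_prod_mul_op _ _ (integrable_of_cont_sm _ hFc hFsm) hfint
            (integrable_of_cont_sm _ hψc hψsm)
      _ = (∫ h, f h ∂μ) ^ (m + 1) := by rw [ih, pow_succ']

lemma integral_pi_castLE_prod (μ : Measure X) [IsProbabilityMeasure μ]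
    {f : X → A} (hf : Continuous f) {g r : ℕ} (hr : g ≤ r) :
    (∫ x : Fin r → X, ((List.finRange g).map fun i => f (x (Fin.castLE hr i))).prod
        ∂(Measure.pi fun _ : Fin r => μ)) = (∫ h, f h ∂μ) ^ g := by
  have hsmf := hf.stronglyMeasurable
  set φ : (Fin g → X) → A := fun y => ((List.finRange g).map fun i => f (y i)).prod with hφ
  have hφc : Continuous φ := contListProd _ _ fun i => hf.comp (continuous_apply _)
  have hφsm : StronglyMeasurable φ :=
    smListProd _ _ fun i => hsmf.comp_measurable (measurable_pi_apply _)
  have hgr : g + (r - g) = r := by omega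
  set σ : Fin g ⊕ Fin (r - g) ≃ Fin r := finSumFinEquiv.trans (finCongr hgr) with hσ
  have hmp1 := measurePreserving_piCongrLeft (fun _ : Fin r => μ) σ
  have hmp2 := measurePreserving_sumPiEquivProdPi (fun _ : Fin g ⊕ Fin (r - g) => μ)
  set F : (Fin r → X) → A :=
    fun x => ((List.finRange g).map fun i => f (x (Fin.castLE hr i))).prod with hFd
  have key : ∀ w : (Fin g ⊕ Fin (r - g)) → X,
      F (MeasurableEquiv.piCongrLeft (fun _ : Fin r => X) σ w) = φ fun i => w (Sum.inl i) := by
    intro w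
    simp only [hFd, hφ]
    congr 1
    refine List.map_congr_left fun i _ => ?_
    congr 1
    have hσi : σ (Sum.inl i) = Fin.castLE hr i := by
      simp [hσ, Fin.ext_iff]
    rw [← hσi]
    exact Equiv.piCongrLeft_apply_apply (P := fun _ : Fin r => X) σ w (Sum.inl i)
  calc (∫ x : Fin r → X, F x ∂(Measure.pi fun _ : Fin r => μ))
      = ∫ w : (Fin g ⊕ Fin (r - g)) → X,
          F (MeasurableEquiv.piCongrLeft (fun _ : Fin r => X) σ w)
          ∂(Measure.pi fun _ : Fin g ⊕ Fin (r - g) => μ) :=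
        (hmp1.integral_comp (MeasurableEquiv.piCongrLeft (fun _ : Fin r => X) σ).measurableEmbedding
          F).symm
    _ = ∫ w : (Fin g ⊕ Fin (r - g)) → X, (φ ∘ Prod.fst)
          ((MeasurableEquiv.sumPiEquivProdPi fun _ : Fin g ⊕ Fin (r - g) => X) w)
          ∂(Measure.pi fun _ : Fin g ⊕ Fin (r - g) => μ) :=
        integral_congr_ae (Filter.Eventually.of_forall fun w => key w)
    _ = ∫ q : (Fin g → X) × (Fin (r - g) → X), (φ ∘ Prod.fst) q
          ∂((Measure.pi fun _ : Fin g => μ).prod (Measure.pi fun _ : Fin (r - g) => μ)) :=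
        hmp2.integral_comp (MeasurableEquiv.sumPiEquivProdPi _).measurableEmbedding _
    _ = ∫ y : Fin g → X, φ y ∂(Measure.pi fun _ : Fin g => μ) := by
        rw [integral_prod]
        · simp
        · exact integrable_of_cont_sm _ (hφc.comp continuous_fst)
            (hφsm.comp_measurable measurable_fst)
    _ = (∫ h, f h ∂μ) ^ g := integral_pi_fin_prod μ hf g

end PiIntegrals

/- ### The main theorem -/

theorem char_integral_nonorientable_surface_word {G : Type*} [Group G] [TopologicalSpace G]
    [IsTopologicalGroup G] [CompactSpace G] [T2Space G] [MeasurableSpace G] [BorelSpace G]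
    (μ : Measure G) [μ.IsHaarMeasure] [IsProbabilityMeasure μ]
    (g r : ℕ) (hg : 1 ≤ g) (hr : g ≤ r)
    {V : Type*} [NormedAddCommGroup V] [InnerProductSpace ℂ V] [FiniteDimensional ℂ V]
    [Nontrivial V]
    (π : G →* unitary (V →L[ℂ] V)) (hπ : Continuous fun x : G => (π x : V →L[ℂ] V))
    (hirr : IsIrreducibleRep π) :
    ∫ gs : Fin r → G,
        LinearMap.trace ℂ V
          ((π (FreeGroup.lift gs (nonorientableSurfaceWord g r hr)) : V →L[ℂ] V) : V →ₗ[ℂ] V)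
      ∂(Measure.pi fun _ => μ)
      = (∫ h : G, LinearMap.trace ℂ V ((π (h * h) : V →L[ℂ] V) : V →ₗ[ℂ] V) ∂μ) ^ g /
          (Module.finrank ℂ V : ℂ) ^ (g - 1) := by
  classical
  haveI : SecondCountableTopology V :=
    (Module.finBasis ℂ V).equivFunL.toHomeomorph.isEmbedding.secondCountableTopology
  haveI : FiniteDimensional ℂ (V →L[ℂ] V) :=
    (LinearMap.toContinuousLinearMap :
      (V →ₗ[ℂ] V) ≃ₗ[ℂ] (V →L[ℂ] V)).finiteDimensional
  -- the representation as a monoid hom into operators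
  set ρ : G →* (V →L[ℂ] V) := ((unitary (V →L[ℂ] V)).subtype).comp π with hρ
  have hρapp : ∀ x : G, ρ x = (π x : V →L[ℂ] V) := fun x => rfl
  set f : G → (V →L[ℂ] V) := fun h => ρ (h * h) with hfd
  have hfc : Continuous f := hπ.comp (continuous_id.mul continuous_id)
  have hfsm : StronglyMeasurable f := hfc.stronglyMeasurable
  have hfint : Integrable f μ := integrable_of_cont_sm μ hfc hfsm
  set T : V →L[ℂ] V := ∫ h, f h ∂μ with hT
  -- the trace functional as a continuous linear map
  set Ltr : (V →L[ℂ] V) →ₗ[ℂ] ℂ :=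
    (LinearMap.trace ℂ V).comp (ContinuousLinearMap.coeLM ℂ) with hLtr
  set Φ : (V →L[ℂ] V) →L[ℂ] ℂ := ⟨Ltr, Ltr.continuous_of_finiteDimensional⟩ with hΦ
  -- T commutes with the representation
  have hcomm : ∀ s : G, ρ s * T = T * ρ s := by
    intro s
    have hconj : MeasurePreserving (fun h : G => s * h * s⁻¹) μ μ :=
      MonoidHom.measurePreserving (f := (MulAut.conj s).toMonoidHom)
        (by
          show Continuous fun h : G => s * h * s⁻¹
          exact (continuous_mul_left s).mul continuous_const)
        (MulAut.conj s).surjective rfl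
    have hemb : MeasurableEmbedding (fun h : G => s * h * s⁻¹) :=
      (((Homeomorph.mulLeft s).trans (Homeomorph.mulRight s⁻¹)).measurableEmbedding)
    have h1 : ρ s * T = ∫ h, ρ s * f h ∂μ := by
      simpa using ((ContinuousLinearMap.mul ℂ (V →L[ℂ] V) (ρ s)).integral_comp_comm hfint).symm
    have h2 : ∀ h : G, ρ s * f h = f (s * h * s⁻¹) * ρ s := by
      intro h
      have e1 : ρ s * f h = ρ (s * (h * h)) := by rw [hfd, ← map_mul]
      have e2 : f (s * h * s⁻¹) * ρ s = ρ ((s * h * s⁻¹) * (s * h * s⁻¹) * s) := by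
        rw [hfd]
        dsimp only
        rw [← map_mul]
      rw [e1, e2]
      congr 1
      group
    have h3 : ∫ h, f (s * h * s⁻¹) * ρ s ∂μ = ∫ h, f h * ρ s ∂μ :=
      hconj.integral_comp hemb (fun h => f h * ρ s)
    have h4 : ∫ h, f h * ρ s ∂μ = T * ρ s := by
      simpa using
        (((ContinuousLinearMap.mul ℂ (V →L[ℂ] V)).flip (ρ s)).integral_comp_comm hfint)
    rw [h1]
    simp_rw [h2]
    rw [h3, h4]
  -- Schur: T is a scalar
  obtain ⟨c, hc⟩ := Module.End.exists_eigenvalue ((T : V →ₗ[ℂ] V) : Module.End ℂ V)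
  have hTv : ∀ v : V, T v = c • v := by
    have hinv : ∀ s : G, ∀ v ∈ Module.End.eigenspace ((T : V →ₗ[ℂ] V) : Module.End ℂ V) c,
        (π s : V →L[ℂ] V) v ∈ Module.End.eigenspace ((T : V →ₗ[ℂ] V) : Module.End ℂ V) c := by
      intro s v hv
      rw [Module.End.mem_eigenspace_iff] at hv ⊢
      have happ : (ρ s) (T v) = T ((ρ s) v) := by
        have := congrArg (fun (L : V →L[ℂ] V) => L v) (hcomm s)
        simpa using this
      show T ((π s : V →L[ℂ] V) v) = c • (π s : V →L[ℂ] V) v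
      rw [← hρapp, ← happ]
      have : T v = c • v := hv
      rw [this, _root_.map_smul]
    rcases hirr _ hinv with hbot | htop
    · exact absurd hbot (Module.End.hasEigenvalue_iff.mp hc)
    · intro v
      have hv : v ∈ Module.End.eigenspace ((T : V →ₗ[ℂ] V) : Module.End ℂ V) c := by
        rw [htop]; trivial
      exact Module.End.mem_eigenspace_iff.mp hv
  have hTs : T = c • (1 : V →L[ℂ] V) := by
    ext v
    simp [hTv v]
  -- the Frobenius-Schur indicator
  set FS : ℂ := ∫ h : G, LinearMap.trace ℂ V ((π (h * h) : V →L[ℂ] V) : V →ₗ[ℂ] V) ∂μ with hFS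
  set d : ℂ := (Module.finrank ℂ V : ℂ) with hd
  have hd0 : d ≠ 0 := by
    rw [hd]
    exact_mod_cast Nat.cast_ne_zero.mpr Module.finrank_pos.ne'
  have hΦ1 : Φ (1 : V →L[ℂ] V) = d := by
    show LinearMap.trace ℂ V ((1 : V →L[ℂ] V) : V →ₗ[ℂ] V) = d
    rw [show ((1 : V →L[ℂ] V) : V →ₗ[ℂ] V) = (1 : V →ₗ[ℂ] V) from rfl, LinearMap.trace_one]
  have hΦT : Φ T = FS := by
    rw [hFS]
    have := Φ.integral_comp_comm hfint
    rw [← this]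
    rfl
  have hFSc : FS = c * d := by
    rw [← hΦT, hTs, _root_.map_smul, hΦ1, smul_eq_mul]
  -- compute the word integrand
  have hword : ∀ gs : Fin r → G,
      (π (FreeGroup.lift gs (nonorientableSurfaceWord g r hr)) : V →L[ℂ] V)
        = ((List.finRange g).map fun i => f (gs (Fin.castLE hr i))).prod := by
    intro gs
    have : (π (FreeGroup.lift gs (nonorientableSurfaceWord g r hr)) : V →L[ℂ] V)
        = (ρ.comp (FreeGroup.lift gs)) (nonorientableSurfaceWord g r hr) := rfl
    rw [this, nonorientableSurfaceWord, map_list_prod, List.map_ofFn, List.ofFn_eq_map]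
    congr 1
    refine List.map_congr_left fun i _ => ?_
    show (ρ.comp (FreeGroup.lift gs)) (FreeGroup.of _ * FreeGroup.of _) = f (gs (Fin.castLE hr i))
    rw [map_mul, hfd]
    dsimp only
    rw [map_mul]
    congr 2 <;>
      · show ρ (FreeGroup.lift gs (FreeGroup.of _)) = ρ (gs (Fin.castLE hr i))
        rw [FreeGroup.lift_apply_of]
        rfl
  -- integrability of the big integrand
  have hbigc : Continuous fun gs : Fin r → G =>
      ((List.finRange g).map fun i => f (gs (Fin.castLE hr i))).prod :=
    contListProd _ _ fun i => hfc.comp (continuous_apply _)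
  have hbigsm : StronglyMeasurable fun gs : Fin r → G =>
      ((List.finRange g).map fun i => f (gs (Fin.castLE hr i))).prod :=
    smListProd _ _ fun i => hfsm.comp_measurable (measurable_pi_apply _)
  have hbigint : Integrable (fun gs : Fin r → G =>
      ((List.finRange g).map fun i => f (gs (Fin.castLE hr i))).prod)
      (Measure.pi fun _ : Fin r => μ) := integrable_of_cont_sm _ hbigc hbigsm
  -- main computation
  have main : (∫ gs : Fin r → G,
      LinearMap.trace ℂ V
        ((π (FreeGroup.lift gs (nonorientableSurfaceWord g r hr)) : V →L[ℂ] V) : V →ₗ[ℂ] V)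
      ∂(Measure.pi fun _ => μ)) = c ^ g * d := by
    have step1 : ∀ gs : Fin r → G,
        LinearMap.trace ℂ V
          ((π (FreeGroup.lift gs (nonorientableSurfaceWord g r hr)) : V →L[ℂ] V) : V →ₗ[ℂ] V)
        = Φ (((List.finRange g).map fun i => f (gs (Fin.castLE hr i))).prod) := by
      intro gs
      rw [← hword gs]
      rfl
    simp_rw [step1]
    rw [Φ.integral_comp_comm hbigint, integral_pi_castLE_prod μ hfc hr, ← hT, hTs, smul_pow, one_pow,
      _root_.map_smul, hΦ1, smul_eq_mul]
  rw [main, hFSc]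
  obtain ⟨m, rfl⟩ : ∃ m, g = m + 1 := ⟨g - 1, by omega⟩
  simp only [Nat.add_sub_cancel]
  field_simp
  ring
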